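/- Let k ≥ 1 and let a_1 ≥ a_2 ≥ ⋯ ≥ a_k ≥ 0 be real numbers with a_1 + ⋯ + a_k = 1. Then the product ∏_{i=1}^k (1+a_i)^{1+a_i} / a_i^{2a_i} is maximized exactly when a_i = 1/k for all i, with maximum value (k+1)^{k+1} / k^{k-1}. -/

import Mathlib

open Real Finset

noncomputable def auxF (x : ℝ) : ℝ := (1 + x) * Real.log (1 + x) - 2 * (x * Real.log x)

lemma auxF_cont : Continuous auxF := by
  have h1 : Continuous fun x : ℝ => (1 + x) * Real.log (1 + x) :=
    Real.continuous_mul_log.comp (continuous_const.add continuous_id)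
  exact h1.sub (continuous_const.mul Real.continuous_mul_log)

lemma auxF_hasDeriv {x : ℝ} (hx : 0 < x) :
    HasDerivAt auxF (Real.log (1 + x) - 2 * Real.log x - 1) x := by
  have h1 : HasDerivAt (fun y : ℝ => (1 + y) * Real.log (1 + y))
      ((Real.log (1 + x) + 1) * 1) x :=
    (Real.hasDerivAt_mul_log (by positivity : (1:ℝ) + x ≠ 0)).comp x
      ((hasDerivAt_id x).const_add 1)
  have h2 : HasDerivAt (fun y : ℝ => y * Real.log y) (Real.log x + 1) x :=
    Real.hasDerivAt_mul_log hx.ne'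
  have h3 := h1.sub (h2.const_mul 2)
  refine h3.congr_deriv ?_
  ring

lemma auxF_strictConcave : StrictConcaveOn ℝ (Set.Icc (0:ℝ) 1) auxF := by
  apply StrictAntiOn.strictConcaveOn_of_deriv (convex_Icc 0 1) auxF_cont.continuousOn
  rw [interior_Icc]
  intro x hx y hy hxy
  rw [(auxF_hasDeriv hx.1).deriv, (auxF_hasDeriv hy.1).deriv]
  have hx0 := hx.1
  have hy0 := hy.1
  have key : (1 + y) / y ^ 2 < (1 + x) / x ^ 2 := by
    rw [div_lt_div_iff₀ (by positivity) (by positivity)]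
    nlinarith [mul_pos (sub_pos.mpr hxy) (show (0:ℝ) < x + y + x*y by positivity)]
  have hlog := Real.log_lt_log (by positivity) key
  rw [Real.log_div (by positivity) (by positivity),
    Real.log_div (by positivity) (by positivity), Real.log_pow, Real.log_pow] at hlog
  push_cast at hlog
  linarith

open Real in
/-- For `k ≥ 1` and reals `a_1 ≥ a_2 ≥ ⋯ ≥ a_k ≥ 0` with `∑ a_i = 1`, the product
`∏ (1+a_i)^(1+a_i) / a_i^(2a_i)` (real powers, with the convention `0^0 = 1`) is at most
`(k+1)^(k+1)/k^(k-1)`, with equality exactly when every `a_i = 1/k`. -/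
theorem prod_max_decreasing (k : ℕ) (hk : 1 ≤ k) (a : Fin k → ℝ)
    (hdec : ∀ i j : Fin k, i ≤ j → a j ≤ a i) (h0 : ∀ i, 0 ≤ a i)
    (hsum : ∑ i, a i = 1) :
    (∏ i, (1 + a i) ^ (1 + a i) / a i ^ (2 * a i)) ≤
      ((k : ℝ) + 1) ^ ((k : ℝ) + 1) / (k : ℝ) ^ ((k : ℝ) - 1) ∧
    ((∏ i, (1 + a i) ^ (1 + a i) / a i ^ (2 * a i)) =
        ((k : ℝ) + 1) ^ ((k : ℝ) + 1) / (k : ℝ) ^ ((k : ℝ) - 1) ↔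
      ∀ i, a i = 1 / (k : ℝ)) := by
  have hk0 : (0:ℝ) < (k:ℝ) := by exact_mod_cast hk
  set P := ∏ i, (1 + a i) ^ (1 + a i) / a i ^ (2 * a i) with hPdef
  set R := ((k : ℝ) + 1) ^ ((k : ℝ) + 1) / (k : ℝ) ^ ((k : ℝ) - 1) with hRdef
  have hterm : ∀ i, 0 < (1 + a i) ^ (1 + a i) / a i ^ (2 * a i) := by
    intro i
    apply div_pos (Real.rpow_pos_of_pos (by linarith [h0 i]) _)
    rcases eq_or_lt_of_le (h0 i) with h | h
    · rw [← h]
      norm_num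
    · exact Real.rpow_pos_of_pos h _
  have hPpos : 0 < P := Finset.prod_pos fun i _ => hterm i
  have hRpos : 0 < R := div_pos (Real.rpow_pos_of_pos (by linarith) _)
    (Real.rpow_pos_of_pos hk0 _)
  have hlogterm : ∀ i, Real.log ((1 + a i) ^ (1 + a i) / a i ^ (2 * a i)) = auxF (a i) := by
    intro i
    rcases eq_or_lt_of_le (h0 i) with h | h
    · rw [← h]
      norm_num [auxF]
    · rw [Real.log_div (Real.rpow_pos_of_pos (by linarith) _).ne'
        (Real.rpow_pos_of_pos h _).ne', Real.log_rpow (by linarith), Real.log_rpow h, auxF]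
      ring
  have hlogP : Real.log P = ∑ i, auxF (a i) := by
    rw [hPdef, Real.log_prod fun i _ => (hterm i).ne']
    exact Finset.sum_congr rfl fun i _ => hlogterm i
  have hlogR : Real.log R = ((k:ℝ)+1) * Real.log ((k:ℝ)+1) - ((k:ℝ)-1) * Real.log (k:ℝ) := by
    rw [hRdef, Real.log_div (Real.rpow_pos_of_pos (by linarith) _).ne'
      (Real.rpow_pos_of_pos hk0 _).ne', Real.log_rpow (by linarith), Real.log_rpow hk0]
  have h1k : Real.log (1 + 1/(k:ℝ)) = Real.log ((k:ℝ)+1) - Real.log (k:ℝ) := by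
    rw [show (1:ℝ) + 1/(k:ℝ) = ((k:ℝ)+1)/(k:ℝ) by field_simp,
      Real.log_div (by linarith) hk0.ne']
  have h2k : Real.log (1/(k:ℝ)) = - Real.log (k:ℝ) := by rw [one_div, Real.log_inv]
  have hkey : (k:ℝ) * auxF (1/(k:ℝ)) = Real.log R := by
    rw [hlogR, auxF, h1k, h2k]
    field_simp
    ring
  have hmem : ∀ i ∈ Finset.univ, a i ∈ Set.Icc (0:ℝ) 1 := by
    intro i _
    refine ⟨h0 i, ?_⟩
    calc a i ≤ ∑ j, a j := Finset.single_le_sum (fun j _ => h0 j) (Finset.mem_univ i)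
    _ = 1 := hsum
  have hw : ∑ _i : Fin k, (1/(k:ℝ)) = 1 := by
    rw [Finset.sum_const, Finset.card_univ, Fintype.card_fin, nsmul_eq_mul]
    field_simp
  have hwpos : ∀ i ∈ (Finset.univ : Finset (Fin k)), 0 < 1/(k:ℝ) := fun i _ => by positivity
  have hcenter : ∑ i, (1/(k:ℝ)) • a i = 1/(k:ℝ) := by
    simp only [smul_eq_mul, ← Finset.mul_sum, hsum, mul_one]
  have hjensen : ∑ i, (1/(k:ℝ)) • auxF (a i) ≤ auxF (1/(k:ℝ)) := by
    have := auxF_strictConcave.concaveOn.le_map_sum (fun i _ => (hwpos i (Finset.mem_univ i)).le)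
      hw hmem
    rwa [hcenter] at this
  have hsum_eq : ∑ i, (1/(k:ℝ)) • auxF (a i) = (1/(k:ℝ)) * ∑ i, auxF (a i) := by
    simp only [smul_eq_mul, ← Finset.mul_sum]
  have hsum_le : ∑ i, auxF (a i) ≤ (k:ℝ) * auxF (1/(k:ℝ)) := by
    rw [hsum_eq] at hjensen
    calc ∑ i, auxF (a i) = (k:ℝ) * ((1/(k:ℝ)) * ∑ i, auxF (a i)) := by field_simp
    _ ≤ (k:ℝ) * auxF (1/(k:ℝ)) := mul_le_mul_of_nonneg_left hjensen hk0.le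
  have hlogle : Real.log P ≤ Real.log R := by
    rw [hlogP, ← hkey]
    exact hsum_le
  have hle : P ≤ R := by
    rw [← Real.exp_log hPpos, ← Real.exp_log hRpos]
    exact Real.exp_le_exp.mpr hlogle
  refine ⟨hle, ?_, ?_⟩
  · -- equality → all equal 1/k
    intro hPR i
    have hlogeq : Real.log P = Real.log R := by rw [hPR]
    have heq : auxF (∑ i, (1/(k:ℝ)) • a i) ≤ ∑ i, (1/(k:ℝ)) • auxF (a i) := by
      rw [hcenter, hsum_eq]
      have : ∑ i, auxF (a i) = (k:ℝ) * auxF (1/(k:ℝ)) := by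
        rw [← hlogP, hlogeq, hkey]
      rw [this]
      field_simp
      exact le_rfl
    have hall := auxF_strictConcave.eq_of_map_sum_eq hwpos hw hmem heq
    have hs : ∑ j, a j = (k:ℝ) * a i := by
      rw [Finset.sum_congr rfl fun j _ => hall (Finset.mem_univ j) (Finset.mem_univ i),
        Finset.sum_const, Finset.card_univ, Fintype.card_fin, nsmul_eq_mul]
    rw [hsum] at hs
    field_simp
    linarith
  · -- all equal 1/k → equality
    intro hall
    have : Real.log P = Real.log R := by
      rw [hlogP, ← hkey, Finset.sum_congr rfl fun i _ => by rw [hall i],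
        Finset.sum_const, Finset.card_univ, Fintype.card_fin, nsmul_eq_mul]
    calc P = Real.exp (Real.log P) := (Real.exp_log hPpos).symm
    _ = Real.exp (Real.log R) := by rw [this]
    _ = R := Real.exp_log hRpos
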